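/- arXiv:1209.2627 — 2 statements merged into one kernel-verified Lean document; each statement's English description precedes it below -/
import Mathlib

section
/- Let Λ be a row-finite k-graph with no sources, R a commutative ring with 1, and let a be a nonzero element of the center Z(KP_R(Λ)) written in normal form a = ∑_{(α,β)∈F} r_{α,β} s_α s_{β*}. Then there exist l ∈ ℕ∖{0} and pairs (α_1,β_1), …, (α_l,β_l) ∈ F such that the composition β_1β_2⋯β_l is defined and is a closed path in Λ (i.e., r(β_1⋯β_l) = s(β_1⋯β_l)). -/
/-- A `k`-graph: a countable category `Λ` together with a degree functor
`d : Λ → ℕ^k` satisfying the unique factorization property.  The elements of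
`Path` are the morphisms ("paths"); the objects are identified with the paths
of degree `0` (the "vertices"), and `r`, `s` assign to a path the identity
morphism at its range and source object.  Composition `comp p q` is only
meaningful when `s p = r q`. -/
structure KGraph (k : ℕ) where
  Path : Type
  countable : Countable Path
  r : Path → Path
  s : Path → Path
  d : Path → (Fin k → ℕ)
  comp : Path → Path → Path
  d_r : ∀ p, d (r p) = 0
  d_s : ∀ p, d (s p) = 0
  r_of_deg_zero : ∀ p, d p = 0 → r p = p
  s_of_deg_zero : ∀ p, d p = 0 → s p = p
  r_comp : ∀ p q, s p = r q → r (comp p q) = r p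
  s_comp : ∀ p q, s p = r q → s (comp p q) = s q
  d_comp : ∀ p q, s p = r q → d (comp p q) = d p + d q
  comp_assoc : ∀ p q t, s p = r q → s q = r t →
    comp (comp p q) t = comp p (comp q t)
  id_comp : ∀ p, comp (r p) p = p
  comp_id : ∀ p, comp p (s p) = p
  factor : ∀ (p : Path) (m n : Fin k → ℕ), d p = m + n →
    ∃! μν : Path × Path, d μν.1 = m ∧ d μν.2 = n ∧ s μν.1 = r μν.2 ∧
      comp μν.1 μν.2 = p

namespace KGraph

variable {k : ℕ} (Λ : KGraph k)

/-- A vertex is a path of degree `0`. -/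
def IsVertex (v : Λ.Path) : Prop := Λ.d v = 0

/-- `Λ` is row-finite if `vΛ^n` is finite for every vertex `v` and `n ∈ ℕ^k`. -/
def RowFinite : Prop :=
  ∀ v, Λ.d v = 0 → ∀ n : Fin k → ℕ, {p : Λ.Path | Λ.r p = v ∧ Λ.d p = n}.Finite

/-- `Λ` has no sources if `vΛ^n ≠ ∅` for every vertex `v` and `n ∈ ℕ^k`. -/
def NoSources : Prop :=
  ∀ v, Λ.d v = 0 → ∀ n : Fin k → ℕ, ∃ p, Λ.r p = v ∧ Λ.d p = n

open Classical in
/-- `Λ.seg lam p q` is the middle segment `lam(p,q)`: whenever `p ≤ q ≤ d lam`,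
it is the unique path `μ` of degree `q - p` arising in a factorization
`lam = α μ β` with `d α = p` (unique by the factorization property). -/
noncomputable def seg (lam : Λ.Path) (p q : Fin k → ℕ) : Λ.Path :=
  if h : ∃ μ, ∃ α β, Λ.d α = p ∧ Λ.d μ = q - p ∧ Λ.s α = Λ.r μ ∧
      Λ.s μ = Λ.r β ∧ Λ.comp α (Λ.comp μ β) = lam then h.choose else lam

/-- Aperiodicity, in the formulation of [RS07, Lemma 3.2(iv)]. -/
def Aperiodic : Prop :=
  ∀ v, Λ.d v = 0 → ∀ m n : Fin k → ℕ, m ≠ n →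
    ∃ lam, Λ.r lam = v ∧ m ⊔ n ≤ Λ.d lam ∧
      Λ.seg lam m (m + Λ.d lam - (m ⊔ n)) ≠ Λ.seg lam n (n + Λ.d lam - (m ⊔ n))

/-- An infinite path: a degree-preserving functor `x : Ω_k → Λ`, recorded by
its segments `x.seg m n` (of degree `n - m`) for `m ≤ n`; `x.seg m m` is the
vertex `x(m)`. -/
structure InfinitePath (Λ : KGraph k) where
  seg : (Fin k → ℕ) → (Fin k → ℕ) → Λ.Path
  d_seg : ∀ m n, m ≤ n → Λ.d (seg m n) = n - m
  r_seg : ∀ m n, m ≤ n → Λ.r (seg m n) = seg m m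
  s_seg : ∀ m n, m ≤ n → Λ.s (seg m n) = seg n n
  comp_seg : ∀ m n q, m ≤ n → n ≤ q → Λ.comp (seg m n) (seg n q) = seg m q

/-- `Λ` is cofinal if for every infinite path `x` and vertex `v` there is
`m ∈ ℕ^k` with `vΛx(m) ≠ ∅`. -/
def Cofinal : Prop :=
  ∀ x : InfinitePath Λ, ∀ v, Λ.d v = 0 →
    ∃ m : Fin k → ℕ, ∃ lam, Λ.r lam = v ∧ Λ.s lam = x.seg m m

/-- A Kumjian-Pask `Λ`-family in a (not necessarily unital) ring `A`.  Here
`S p` plays the role of `s_p` and `S' p` the role of the ghost element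
`s_{p*}`, with the convention `S v = S' v = p_v` for vertices `v`. -/
structure IsKPFamily {A : Type*} [NonUnitalRing A] (S S' : Λ.Path → A) : Prop where
  /-- for a vertex `v`, both `S v` and `S' v` denote `p_v` -/
  vertex_eq : ∀ v, Λ.d v = 0 → S' v = S v
  /-- (KP1): the `p_v` are mutually orthogonal idempotents -/
  orthogonal : ∀ u v, Λ.d u = 0 → Λ.d v = 0 →
    (u = v → S u * S v = S u) ∧ (u ≠ v → S u * S v = 0)
  /-- (KP2): `S_p S_q = S_{pq}` (this also subsumes the unit laws
  `P_{r p} S_p = S_p = S_p P_{s p}`, via `id_comp` and `comp_id`) -/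
  mul_comp : ∀ p q, Λ.s p = Λ.r q → S p * S q = S (Λ.comp p q)
  /-- (KP2) for ghost paths: `S_{q*} S_{p*} = S_{(pq)*}` -/
  ghost_mul_comp : ∀ p q, Λ.s p = Λ.r q → S' q * S' p = S' (Λ.comp p q)
  /-- (KP3): `S_{p*} S_q = δ_{p,q} P_{s p}` for `d p = d q` -/
  kp3 : ∀ p q, Λ.d p = Λ.d q →
    (p = q → S' p * S q = S (Λ.s p)) ∧ (p ≠ q → S' p * S q = 0)
  /-- (KP4): `P_v = ∑_{p ∈ vΛ^n} S_p S_{p*}` for every vertex `v` and `n ≠ 0` -/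
  kp4 : ∀ v, Λ.d v = 0 → ∀ n : Fin k → ℕ, n ≠ 0 → ∀ T : Finset Λ.Path,
    (∀ p, p ∈ T ↔ (Λ.r p = v ∧ Λ.d p = n)) → S v = ∑ p ∈ T, S p * S' p

end KGraph

/-- `(A, S, S')` is *the* Kumjian-Pask algebra `KP_R(Λ)`: `(S, S')` is a
Kumjian-Pask `Λ`-family in the `R`-algebra `A` with `r • p_v ≠ 0` for all
`r ≠ 0` (so in particular the family is nonzero), and `A` has the universal
property: every Kumjian-Pask `Λ`-family in an `R`-algebra `B` is the image of
`(S, S')` under a unique `R`-algebra homomorphism. -/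
structure IsKumjianPaskAlgebra (R : Type*) [CommRing R] {k : ℕ} (Λ : KGraph k)
    (A : Type*) [NonUnitalRing A] [Module R A] [SMulCommClass R A A]
    [IsScalarTower R A A] (S S' : Λ.Path → A) : Prop where
  isFamily : Λ.IsKPFamily S S'
  smul_vertex_ne_zero : ∀ v, Λ.d v = 0 → ∀ r : R, r ≠ 0 → r • S v ≠ 0
  universal : ∀ (B : Type*) [NonUnitalRing B] [Module R B] [SMulCommClass R B B]
    [IsScalarTower R B B] (T T' : Λ.Path → B), Λ.IsKPFamily T T' →
    ∃! φ : A →ₙₐ[R] B, (∀ p, φ (S p) = T p) ∧ ∀ p, φ (S' p) = T' p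

variable {k : ℕ}

/-- Let `a` be a nonzero element of the center of `KP_R(Λ)`, written in normal
form `a = ∑_{(α,β) ∈ F} r_{α,β} s_α s_{β*}`.  Then there are `l ≥ 1` and
pairs `(α_1,β_1), …, (α_l,β_l) ∈ F` such that the composition `β_1 β_2 ⋯ β_l`
is defined (consecutive sources and ranges match) and is a closed path, i.e.
the range of `β_1` equals the source of `β_l`. -/
theorem center_normal_form_closed_path
    (Λ : KGraph k) (hrow : Λ.RowFinite) (hsrc : Λ.NoSources)
    (R : Type*) [CommRing R]
    {A : Type*} [NonUnitalRing A] [Module R A] [SMulCommClass R A A]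
    [IsScalarTower R A A] {S S' : Λ.Path → A}
    (hKP : IsKumjianPaskAlgebra R Λ A S S')
    (a : A) (ha : a ≠ 0) (hcen : ∀ b : A, a * b = b * a)
    (F : Finset (Λ.Path × Λ.Path)) (c : Λ.Path × Λ.Path → R) (m : Fin k → ℕ)
    (hdm : ∀ x ∈ F, Λ.d x.2 = m)
    (hss : ∀ x ∈ F, Λ.s x.1 = Λ.s x.2)
    (hc : ∀ x ∈ F, c x ≠ 0)
    (hnf : a = ∑ x ∈ F, c x • (S x.1 * S' x.2)) :
    ∃ l : ℕ, ∃ hl : 0 < l, ∃ g : Fin l → Λ.Path × Λ.Path,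
      (∀ i, g i ∈ F) ∧
      (∀ i : ℕ, ∀ h : i + 1 < l,
        Λ.s (g ⟨i, Nat.lt_of_succ_lt h⟩).2 = Λ.r (g ⟨i + 1, h⟩).2) ∧
      Λ.r (g ⟨0, hl⟩).2 = Λ.s (g ⟨l - 1, Nat.sub_lt hl Nat.one_pos⟩).2 := by
  classical
  have fam := hKP.isFamily
  have hFne : F.Nonempty := by
    rcases F.eq_empty_or_nonempty with h | h
    · exact absurd (by rw [hnf, h, Finset.sum_empty]) ha
    · exact h
  by_cases hm : m = 0
  · obtain ⟨x0, hx0⟩ := hFne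
    have h0 : Λ.d x0.2 = 0 := by rw [hdm x0 hx0, hm]
    exact ⟨1, one_pos, fun _ => x0, fun _ => hx0, fun i h => absurd h (by omega),
      by show Λ.r x0.2 = Λ.s x0.2; rw [Λ.r_of_deg_zero _ h0, Λ.s_of_deg_zero _ h0]⟩
  -- a ghost path times a vertex projection
  have hgv : ∀ β v, Λ.d v = 0 → S' β * S v = if Λ.r β = v then S' β else 0 := by
    intro β v hv
    have h1 : S' β * S' (Λ.r β) = S' β := by
      rw [fam.ghost_mul_comp (Λ.r β) β (Λ.s_of_deg_zero _ (Λ.d_r β)), Λ.id_comp]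
    have h2 : S' β = S' β * S (Λ.r β) := by
      rw [← fam.vertex_eq _ (Λ.d_r β), h1]
    by_cases hrv : Λ.r β = v
    · rw [if_pos hrv]
      conv_lhs => rw [h2]
      rw [mul_assoc, (fam.orthogonal _ _ (Λ.d_r β) hv).1 hrv, ← h2]
    · rw [if_neg hrv]
      conv_lhs => rw [h2]
      rw [mul_assoc, (fam.orthogonal _ _ (Λ.d_r β) hv).2 hrv, mul_zero]
  -- the normal form of `a * S v` for a vertex `v`
  have haSv : ∀ v, Λ.d v = 0 →
      a * S v = ∑ y ∈ F, if Λ.r y.2 = v then c y • (S y.1 * S' y.2) else 0 := by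
    intro v hv
    rw [hnf, Finset.sum_mul]
    refine Finset.sum_congr rfl fun y hy => ?_
    rw [smul_mul_assoc, mul_assoc, hgv y.2 v hv]
    by_cases hrv : Λ.r y.2 = v
    · rw [if_pos hrv, if_pos hrv]
    · rw [if_neg hrv, if_neg hrv, mul_zero, smul_zero]
  -- there is a vertex not annihilating `a`
  have hbase : ∃ v, Λ.d v = 0 ∧ a * S v ≠ 0 := by
    by_contra hall
    push_neg at hall
    apply ha
    have hrw : ∑ v ∈ F.image (fun y => Λ.r y.2), a * S v = a := by
      have hcongr : ∀ v ∈ F.image (fun y => Λ.r y.2),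
          a * S v = ∑ y ∈ F, if Λ.r y.2 = v then c y • (S y.1 * S' y.2) else 0 := by
        intro v hvmem
        obtain ⟨y, hy, rfl⟩ := Finset.mem_image.mp hvmem
        exact haSv _ (Λ.d_r y.2)
      rw [Finset.sum_congr rfl hcongr, Finset.sum_comm, hnf]
      refine Finset.sum_congr rfl fun y hy => ?_
      rw [Finset.sum_ite_eq, if_pos (Finset.mem_image_of_mem _ hy)]
    calc a = ∑ v ∈ F.image (fun y => Λ.r y.2), a * S v := hrw.symm
      _ = 0 := Finset.sum_eq_zero fun v hvmem => by
          obtain ⟨y, hy, rfl⟩ := Finset.mem_image.mp hvmem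
          exact hall _ (Λ.d_r y.2)
  -- the key extension step
  have key : ∀ v, Λ.d v = 0 → a * S v ≠ 0 →
      ∃ y, y ∈ F ∧ Λ.r y.2 = v ∧ (Λ.d (Λ.s y.2) = 0 ∧ a * S (Λ.s y.2) ≠ 0) := by
    intro v hv hav
    set T := (hrow v hv m).toFinset with hT
    have hmemT : ∀ p, p ∈ T ↔ (Λ.r p = v ∧ Λ.d p = m) := by
      intro p; rw [hT, Set.Finite.mem_toFinset]; rfl
    have hkp4 := fam.kp4 v hv m hm T hmemT
    have hsum : a * S v = ∑ p ∈ T, (a * S p) * S' p := by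
      rw [hkp4, Finset.mul_sum]
      exact Finset.sum_congr rfl fun p _ => (mul_assoc _ _ _).symm
    obtain ⟨p, hpT, hp⟩ : ∃ p ∈ T, (a * S p) * S' p ≠ 0 := by
      by_contra hc2
      push_neg at hc2
      exact hav (by rw [hsum, Finset.sum_eq_zero hc2])
    have hap : a * S p ≠ 0 := fun h0 => hp (by rw [h0, zero_mul])
    have hdp : Λ.d p = m := ((hmemT p).mp hpT).2
    have haS : a * S p = ∑ y ∈ F, if y.2 = p then c y • S y.1 else 0 := by
      rw [hnf, Finset.sum_mul]
      refine Finset.sum_congr rfl fun y hy => ?_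
      by_cases hyp : y.2 = p
      · rw [if_pos hyp, smul_mul_assoc, mul_assoc,
          (fam.kp3 y.2 p (by rw [hdm y hy, hdp])).1 hyp]
        congr 1
        rw [show Λ.s y.2 = Λ.s y.1 from (hss y hy).symm,
          fam.mul_comp y.1 (Λ.s y.1) (by rw [Λ.r_of_deg_zero _ (Λ.d_s y.1)]), Λ.comp_id]
      · rw [if_neg hyp, smul_mul_assoc, mul_assoc,
          (fam.kp3 y.2 p (by rw [hdm y hy, hdp])).2 hyp, mul_zero, smul_zero]
    obtain ⟨y, hyF, hy2⟩ : ∃ y ∈ F, y.2 = p := by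
      by_contra hc2
      push_neg at hc2
      exact hap (by rw [haS, Finset.sum_eq_zero fun y hy => if_neg (hc2 y hy)])
    refine ⟨y, hyF, by rw [hy2]; exact ((hmemT p).mp hpT).1, Λ.d_s _, ?_⟩
    intro h0
    apply hap
    rw [← hy2]
    have hy2s : S y.2 = S y.2 * S (Λ.s y.2) := by
      rw [fam.mul_comp y.2 (Λ.s y.2) (by rw [Λ.r_of_deg_zero _ (Λ.d_s y.2)]), Λ.comp_id]
    calc a * S y.2 = S y.2 * a := hcen _
      _ = S y.2 * S (Λ.s y.2) * a := by rw [← hy2s]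
      _ = S y.2 * (S (Λ.s y.2) * a) := mul_assoc _ _ _
      _ = S y.2 * (a * S (Λ.s y.2)) := by rw [hcen]
      _ = 0 := by rw [h0, mul_zero]
  obtain ⟨v0, hv0d, hv0a⟩ := hbase
  choose! nxt hnxtF hnxtr hnxtP using key
  let vseq : ℕ → Λ.Path := fun n => Nat.rec v0 (fun _ v => Λ.s (nxt v).2) n
  have hvP : ∀ n, Λ.d (vseq n) = 0 ∧ a * S (vseq n) ≠ 0 := by
    intro n
    induction n with
    | zero => exact ⟨hv0d, hv0a⟩
    | succ n ih => exact hnxtP (vseq n) ih.1 ih.2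
  set seq : ℕ → Λ.Path × Λ.Path := fun n => nxt (vseq n) with hseqdef
  have hseqF : ∀ n, seq n ∈ F := fun n => hnxtF (vseq n) (hvP n).1 (hvP n).2
  have hseqr : ∀ n, Λ.r (seq (n+1)).2 = Λ.s (seq n).2 := by
    intro n
    exact hnxtr (vseq (n+1)) (hvP (n+1)).1 (hvP (n+1)).2
  obtain ⟨i, j, hij, hseqij⟩ : ∃ i j, i < j ∧ seq i = seq j := by
    obtain ⟨i, j, hne, heq⟩ :=
      Finite.exists_ne_map_eq_of_infinite (fun n : ℕ => (⟨seq n, hseqF n⟩ : {y // y ∈ F}))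
    have heq' : seq i = seq j := congrArg Subtype.val heq
    rcases Nat.lt_or_ge i j with hlt | hge
    · exact ⟨i, j, hlt, heq'⟩
    · exact ⟨j, i, lt_of_le_of_ne hge (fun e => hne e.symm), heq'.symm⟩
  refine ⟨j - i, Nat.sub_pos_of_lt hij, fun t => seq (i + t.val), fun t => hseqF _, ?_, ?_⟩
  · intro t ht
    show Λ.s (seq (i + t)).2 = Λ.r (seq (i + (t+1))).2
    rw [show i + (t+1) = (i+t)+1 from rfl]
    exact (hseqr (i+t)).symm
  · show Λ.r (seq (i + 0)).2 = Λ.s (seq (i + (j - i - 1))).2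
    have h1 : i + (j - i - 1) = j - 1 := by omega
    have h2 : j - 1 + 1 = j := by omega
    have h3 := hseqr (j - 1)
    rw [h2] at h3
    rw [Nat.add_zero, hseqij, h1]
    exact h3
end

section
/- Let Λ be a row-finite k-graph with no sources that is cofinal, and R a commutative ring with 1. Let a be a nonzero element of the center Z(KP_R(Λ)) written in normal form a = ∑_{(α,β)∈F} r_{α,β} s_α s_{β*}. Then {v ∈ Λ^0 : there exists (α,β) ∈ F with v = r(β)} = Λ^0. -/
variable {k : ℕ}
namespace KGraph

variable {k : ℕ} {Λ : KGraph k}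

lemma factor_eq {a b a' b' : Λ.Path} (hd : Λ.d a = Λ.d a')
    (h1 : Λ.s a = Λ.r b) (h2 : Λ.s a' = Λ.r b') (h : Λ.comp a b = Λ.comp a' b') :
    a = a' ∧ b = b' := by
  have hdp : Λ.d (Λ.comp a b) = Λ.d a + Λ.d b := Λ.d_comp a b h1
  obtain ⟨y, hy, hu⟩ := Λ.factor (Λ.comp a b) (Λ.d a) (Λ.d b) hdp
  have hdb : Λ.d b' = Λ.d b := by
    have h2' : Λ.d (Λ.comp a' b') = Λ.d a' + Λ.d b' := Λ.d_comp a' b' h2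
    rw [← h, hdp, hd] at h2'
    exact (add_left_cancel h2').symm
  have e1 := hu (a, b) ⟨rfl, rfl, h1, rfl⟩
  have e2 := hu (a', b') ⟨hd.symm, hdb, h2, h.symm⟩
  have := e1.trans e2.symm
  exact ⟨congrArg Prod.fst this, congrArg Prod.snd this⟩

lemma seg_eq {lam α μ β : Λ.Path} {m q : Fin k → ℕ} (hdα : Λ.d α = m)
    (hq : q = m + Λ.d μ) (h1 : Λ.s α = Λ.r μ) (h2 : Λ.s μ = Λ.r β)
    (h3 : Λ.comp α (Λ.comp μ β) = lam) :
    Λ.seg lam m q = μ := by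
  have hdμ : Λ.d μ = q - m := by
    subst hq; funext i
    simp only [Pi.sub_apply, Pi.add_apply]
    omega
  have hex : ∃ μ', ∃ α' β', Λ.d α' = m ∧ Λ.d μ' = q - m ∧ Λ.s α' = Λ.r μ' ∧
      Λ.s μ' = Λ.r β' ∧ Λ.comp α' (Λ.comp μ' β') = lam :=
    ⟨μ, α, β, hdα, hdμ, h1, h2, h3⟩
  rw [KGraph.seg, dif_pos hex]
  obtain ⟨α', β', hA, hB, hC, hD, hE⟩ := hex.choose_spec
  have hr1 : Λ.s α' = Λ.r (Λ.comp hex.choose β') := by rw [Λ.r_comp _ _ hD]; exact hC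
  have hr2 : Λ.s α = Λ.r (Λ.comp μ β) := by rw [Λ.r_comp _ _ h2]; exact h1
  obtain ⟨ea, eb⟩ := factor_eq (by rw [hA, hdα]) hr1 hr2 (by rw [hE, h3])
  exact (factor_eq (by rw [hB, hdμ]) hD h2 eb).1

lemma exists_triple {lam : Λ.Path} {m n : Fin k → ℕ} (hm : m ≤ n) (hn : n ≤ Λ.d lam) :
    ∃ α μ β : Λ.Path, Λ.d α = m ∧ Λ.d μ = n - m ∧ Λ.d β = Λ.d lam - n ∧
      Λ.s α = Λ.r μ ∧ Λ.s μ = Λ.r β ∧ Λ.comp α (Λ.comp μ β) = lam ∧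
      Λ.r α = Λ.r lam ∧ Λ.s β = Λ.s lam := by
  obtain ⟨⟨α, ρ⟩, ⟨hda, hdr, hsr, hcomp⟩, -⟩ := Λ.factor lam m (Λ.d lam - m)
    (by funext i; simp only [Pi.add_apply, Pi.sub_apply]; have h1 : m i ≤ n i := hm i; have h2 : n i ≤ Λ.d lam i := hn i; omega)
  obtain ⟨⟨μ, β⟩, ⟨hdμ, hdβ, hsμ, hcomp2⟩, -⟩ := Λ.factor ρ (n - m) (Λ.d lam - n)
    (by rw [hdr]; funext i; simp only [Pi.add_apply, Pi.sub_apply]; have h1 : m i ≤ n i := hm i; have h2 : n i ≤ Λ.d lam i := hn i; omega)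
  refine ⟨α, μ, β, hda, hdμ, hdβ, ?_, hsμ, ?_, ?_, ?_⟩
  · rw [hsr, ← hcomp2, Λ.r_comp _ _ hsμ]
  · rw [hcomp2, hcomp]
  · rw [← hcomp, Λ.r_comp _ _ hsr]
  · rw [← hcomp, Λ.s_comp _ _ hsr, ← hcomp2, Λ.s_comp _ _ hsμ]

end KGraph
namespace KGraph

variable {k : ℕ} {Λ : KGraph k}

/-- `p` is an initial segment of `q`. -/
def IsPrefix (Λ : KGraph k) (p q : Λ.Path) : Prop :=
  ∃ t, Λ.s p = Λ.r t ∧ Λ.comp p t = q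

lemma isPrefix_refl (p : Λ.Path) : Λ.IsPrefix p p :=
  ⟨Λ.s p, (Λ.r_of_deg_zero _ (Λ.d_s p)).symm, Λ.comp_id p⟩

lemma isPrefix_trans {p q l : Λ.Path} (h1 : Λ.IsPrefix p q) (h2 : Λ.IsPrefix q l) :
    Λ.IsPrefix p l := by
  obtain ⟨t₁, ht₁, e₁⟩ := h1
  obtain ⟨t₂, ht₂, e₂⟩ := h2
  have hst₁ : Λ.s t₁ = Λ.r t₂ := by rw [← e₁] at ht₂; rw [← ht₂, Λ.s_comp _ _ ht₁]
  refine ⟨Λ.comp t₁ t₂, ?_, ?_⟩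
  · rw [Λ.r_comp _ _ hst₁]; exact ht₁
  · rw [← Λ.comp_assoc _ _ _ ht₁ hst₁, e₁, e₂]

lemma isPrefix_d_le {p q : Λ.Path} (h : Λ.IsPrefix p q) : Λ.d p ≤ Λ.d q := by
  obtain ⟨t, ht, e⟩ := h
  rw [Pi.le_def]
  intro i
  have hd := Λ.d_comp p t ht
  rw [e] at hd
  have := congrFun hd i
  simp only [Pi.add_apply] at this
  omega

lemma exists_prefix {lam : Λ.Path} {n : Fin k → ℕ} (hn : n ≤ Λ.d lam) :
    ∃ p, Λ.IsPrefix p lam ∧ Λ.d p = n ∧ Λ.r p = Λ.r lam := by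
  obtain ⟨⟨p, t⟩, ⟨hdp, hdt, hst, hcomp⟩, -⟩ := Λ.factor lam n (Λ.d lam - n)
    (by funext i; simp only [Pi.add_apply, Pi.sub_apply]
        have : n i ≤ Λ.d lam i := hn i; omega)
  exact ⟨p, ⟨t, hst, hcomp⟩, hdp, by rw [← hcomp, Λ.r_comp _ _ hst]⟩

lemma prefix_unique {lam p p' : Λ.Path} (hd : Λ.d p = Λ.d p')
    (h1 : Λ.IsPrefix p lam) (h2 : Λ.IsPrefix p' lam) : p = p' := by
  obtain ⟨t, ht, e⟩ := h1
  obtain ⟨t', ht', e'⟩ := h2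
  exact (factor_eq hd ht ht' (e.trans e'.symm)).1

lemma prefix_sandwich {p l : Λ.Path} (hpl : Λ.IsPrefix p l) {n : Fin k → ℕ}
    (h1 : Λ.d p ≤ n) (h2 : n ≤ Λ.d l) :
    ∃ q, Λ.d q = n ∧ Λ.IsPrefix p q ∧ Λ.IsPrefix q l := by
  obtain ⟨t, ht, e⟩ := hpl
  have hdt : Λ.d t = Λ.d l - Λ.d p := by
    have := e ▸ Λ.d_comp p t ht
    funext i
    have h := congrFun this i
    simp only [Pi.add_apply, Pi.sub_apply] at *
    omega
  obtain ⟨⟨t₁, t₂⟩, ⟨hdt₁, hdt₂, hst, hcomp2⟩, -⟩ := Λ.factor t (n - Λ.d p) (Λ.d l - n)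
    (by rw [hdt]; funext i; simp only [Pi.add_apply, Pi.sub_apply]
        have ha : Λ.d p i ≤ n i := h1 i; have hb : n i ≤ Λ.d l i := h2 i; omega)
  have hrt₁ : Λ.s p = Λ.r t₁ := by rw [ht, ← hcomp2, Λ.r_comp _ _ hst]
  refine ⟨Λ.comp p t₁, ?_, ⟨t₁, hrt₁, rfl⟩, ⟨t₂, ?_, ?_⟩⟩
  · rw [Λ.d_comp _ _ hrt₁, hdt₁]; funext i
    simp only [Pi.add_apply, Pi.sub_apply]
    have ha : Λ.d p i ≤ n i := h1 i; omega
  · rw [Λ.s_comp _ _ hrt₁]; exact hst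
  · rw [Λ.comp_assoc _ _ _ hrt₁ hst, hcomp2, e]

lemma prefix_compare {p₁ p₂ l : Λ.Path} (h1 : Λ.IsPrefix p₁ l) (h2 : Λ.IsPrefix p₂ l)
    (hd : Λ.d p₁ ≤ Λ.d p₂) : Λ.IsPrefix p₁ p₂ := by
  obtain ⟨q, hdq, hq1, hq2⟩ := prefix_sandwich h1 hd (isPrefix_d_le h2)
  rwa [prefix_unique hdq hq2 h2] at hq1

lemma seg_spec_all {lam : Λ.Path} {m n : Fin k → ℕ} (hm : m ≤ n) (hn : n ≤ Λ.d lam) :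
    Λ.d (Λ.seg lam m n) = n - m ∧ Λ.r (Λ.seg lam m n) = Λ.seg lam m m ∧
      Λ.s (Λ.seg lam m n) = Λ.seg lam n n := by
  obtain ⟨α, μ, β, hdα, hdμ, hdβ, h1, h2, h3, hrα, hsβ⟩ := exists_triple hm hn
  have hq : n = m + Λ.d μ := by
    rw [hdμ]; funext i; simp only [Pi.add_apply, Pi.sub_apply]
    have : m i ≤ n i := hm i; omega
  have hseg : Λ.seg lam m n = μ := seg_eq hdα hq h1 h2 h3
  have hrsα : Λ.r (Λ.s α) = Λ.s α := Λ.r_of_deg_zero _ (Λ.d_s α)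
  have hsegm : Λ.seg lam m m = Λ.s α := by
    refine seg_eq (β := Λ.comp μ β) hdα ?_ hrsα.symm ?_ ?_
    · rw [Λ.d_s]; funext i; simp only [Pi.add_apply, Pi.zero_apply]; omega
    · rw [Λ.s_of_deg_zero _ (Λ.d_s α), h1, Λ.r_comp _ _ h2]
    · rw [show Λ.s α = Λ.r (Λ.comp μ β) by rw [Λ.r_comp _ _ h2]; exact h1,
        Λ.id_comp, h3]
  have hrsμ : Λ.r (Λ.s μ) = Λ.s μ := Λ.r_of_deg_zero _ (Λ.d_s μ)
  have hsegn : Λ.seg lam n n = Λ.s μ := by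
    have hαμ : Λ.d (Λ.comp α μ) = n := by
      rw [Λ.d_comp _ _ h1, hdα, hdμ]; funext i
      simp only [Pi.add_apply, Pi.sub_apply]
      have : m i ≤ n i := hm i; omega
    refine seg_eq (β := β) hαμ ?_ ?_ ?_ ?_
    · rw [Λ.d_s]; funext i; simp only [Pi.add_apply, Pi.zero_apply]; omega
    · rw [Λ.s_comp _ _ h1]; exact hrsμ.symm
    · rw [Λ.s_of_deg_zero _ (Λ.d_s μ)]; exact h2
    · rw [show Λ.s μ = Λ.r β from h2, Λ.id_comp, Λ.comp_assoc _ _ _ h1 h2, h3]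
  refine ⟨by rw [hseg, hdμ], ?_, ?_⟩
  · rw [hseg, hsegm, ← h1]
  · rw [hseg, hsegn]

lemma seg_comp' {lam : Λ.Path} {m n q : Fin k → ℕ} (hm : m ≤ n) (hn : n ≤ q)
    (hq : q ≤ Λ.d lam) :
    Λ.comp (Λ.seg lam m n) (Λ.seg lam n q) = Λ.seg lam m q := by
  obtain ⟨α, μ₁, ρ, hdα, hdμ₁, hdρ, h1, h2, h3, hrα, hsρ⟩ := exists_triple hm (hn.trans hq)
  obtain ⟨⟨μ₂, β⟩, ⟨hdμ₂, hdβ, hsμ₂, hcomp2⟩, -⟩ := Λ.factor ρ (q - n) (Λ.d lam - q)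
    (by rw [hdρ]; funext i; simp only [Pi.add_apply, Pi.sub_apply]
        have ha : n i ≤ q i := hn i; have hb : q i ≤ Λ.d lam i := hq i; omega)
  have h2' : Λ.s μ₁ = Λ.r μ₂ := by rw [h2, ← hcomp2, Λ.r_comp _ _ hsμ₂]
  have hseg1 : Λ.seg lam m n = μ₁ := by
    refine seg_eq hdα ?_ h1 h2 h3
    rw [hdμ₁]; funext i; simp only [Pi.add_apply, Pi.sub_apply]
    have : m i ≤ n i := hm i; omega
  have hseg2 : Λ.seg lam n q = μ₂ := by
    have hαμ : Λ.d (Λ.comp α μ₁) = n := by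
      rw [Λ.d_comp _ _ h1, hdα, hdμ₁]; funext i
      simp only [Pi.add_apply, Pi.sub_apply]
      have : m i ≤ n i := hm i; omega
    refine seg_eq (β := β) hαμ ?_ ?_ hsμ₂ ?_
    · rw [hdμ₂]; funext i; simp only [Pi.add_apply, Pi.sub_apply]
      have : n i ≤ q i := hn i; omega
    · rw [Λ.s_comp _ _ h1]; exact h2'
    · rw [hcomp2, Λ.comp_assoc _ _ _ h1 h2, h3]
  have hseg3 : Λ.seg lam m q = Λ.comp μ₁ μ₂ := by
    refine seg_eq (β := β) hdα ?_ ?_ ?_ ?_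
    · rw [Λ.d_comp _ _ h2', hdμ₁, hdμ₂]; funext i
      simp only [Pi.add_apply, Pi.sub_apply]
      have ha : m i ≤ n i := hm i; have hb : n i ≤ q i := hn i; omega
    · rw [Λ.r_comp _ _ h2']; exact h1
    · rw [Λ.s_comp _ _ h2']; exact hsμ₂
    · rw [Λ.comp_assoc _ _ _ h2' hsμ₂, hcomp2, h3]
  rw [hseg1, hseg2, hseg3]

lemma seg_extend {lam t : Λ.Path} (hst : Λ.s lam = Λ.r t) {m n : Fin k → ℕ}
    (hm : m ≤ n) (hn : n ≤ Λ.d lam) :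
    Λ.seg (Λ.comp lam t) m n = Λ.seg lam m n := by
  obtain ⟨α, μ, β, hdα, hdμ, hdβ, h1, h2, h3, hrα, hsβ⟩ := exists_triple hm hn
  have hq : n = m + Λ.d μ := by
    rw [hdμ]; funext i; simp only [Pi.add_apply, Pi.sub_apply]
    have : m i ≤ n i := hm i; omega
  have hβt : Λ.s β = Λ.r t := by rw [hsβ]; exact hst
  have h2' : Λ.s μ = Λ.r (Λ.comp β t) := by rw [Λ.r_comp _ _ hβt]; exact h2
  have hseg2 : Λ.seg (Λ.comp lam t) m n = μ := by
    refine seg_eq hdα hq h1 h2' ?_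
    have hμβ : Λ.s (Λ.comp μ β) = Λ.r t := by rw [Λ.s_comp _ _ h2]; exact hβt
    have hαμβ : Λ.s α = Λ.r (Λ.comp μ β) := by rw [Λ.r_comp _ _ h2]; exact h1
    rw [← Λ.comp_assoc _ _ _ h2 hβt, ← Λ.comp_assoc _ _ _ hαμβ hμβ, h3]
  rw [hseg2, seg_eq hdα hq h1 h2 h3]

lemma seg_self_prefix {lam : Λ.Path} {m : Fin k → ℕ} (hm : m ≤ Λ.d lam) :
    ∃ p, Λ.IsPrefix p lam ∧ Λ.d p = m ∧ Λ.seg lam m m = Λ.s p := by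
  obtain ⟨p, ⟨t, hst, hcomp⟩, hdp, hrp⟩ := exists_prefix hm
  refine ⟨p, ⟨t, hst, hcomp⟩, hdp, ?_⟩
  refine seg_eq (β := t) hdp ?_ (Λ.r_of_deg_zero _ (Λ.d_s p)).symm ?_ ?_
  · rw [Λ.d_s]; funext i; simp only [Pi.add_apply, Pi.zero_apply]; omega
  · rw [Λ.s_of_deg_zero _ (Λ.d_s p)]; exact hst
  · rw [show Λ.s p = Λ.r t from hst, Λ.id_comp, hcomp]

end KGraph
namespace KGraph

variable {k : ℕ} {Λ : KGraph k}

/-- `p` has arbitrarily long extensions/restrictions within the system of sets `Bd`. -/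
def Grows (Λ : KGraph k) (Bd : ℕ → Set Λ.Path) (p : Λ.Path) : Prop :=
  ∀ j, ∃ q ∈ Bd j, Λ.IsPrefix p q ∨ Λ.IsPrefix q p

lemma konig_step (hk : 0 < k) (Bd : ℕ → Set Λ.Path)
    (hfin : ∀ j, (Bd j).Finite)
    (hdeg : ∀ j p, p ∈ Bd j → Λ.d p = fun _ => j)
    (hcl : ∀ j (l p : Λ.Path), l ∈ Bd j → Λ.IsPrefix p l →
      ∀ j', Λ.d p = (fun _ => j') → p ∈ Bd j')
    (j : ℕ) (p : Λ.Path) (hgp : Grows Λ Bd p) (hdp : Λ.d p = fun _ => j) :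
    ∃ p', p' ∈ Bd (j + 1) ∧ Λ.IsPrefix p p' ∧ Grows Λ Bd p' := by
  classical
  by_contra hcon
  push_neg at hcon
  set g : Λ.Path → ℕ := fun q =>
    if h : ∃ jj, ∀ l ∈ Bd jj, ¬ Λ.IsPrefix q l ∧ ¬ Λ.IsPrefix l q then h.choose else 0
    with hg
  set M : ℕ := (Finset.sup ((hfin (j + 1)).toFinset) g) ⊔ (j + 1) with hM
  have hjM : j + 1 ≤ M := le_sup_right
  obtain ⟨q, hqBd, hq⟩ := hgp M
  have hdq : Λ.d q = fun _ => M := hdeg M q hqBd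
  have hpq : Λ.IsPrefix p q := by
    rcases hq with h | h
    · exact h
    · exfalso
      have hle := isPrefix_d_le h
      have : M ≤ j := by
        have := hle ⟨0, hk⟩
        rwa [congrFun hdq ⟨0, hk⟩, congrFun hdp ⟨0, hk⟩] at this
      omega
  obtain ⟨q₀, hdq₀, hpq₀, hq₀q⟩ := prefix_sandwich hpq (n := fun _ => j + 1)
    (by rw [hdp, Pi.le_def]; intro i; omega)
    (by rw [hdq, Pi.le_def]; intro i; omega)
  have hq₀Bd : q₀ ∈ Bd (j + 1) := hcl M q q₀ hqBd hq₀q (j + 1) hdq₀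
  have hng : ¬ Grows Λ Bd q₀ := hcon q₀ hq₀Bd hpq₀
  rw [Grows] at hng
  push_neg at hng
  have hex : ∃ jj, ∀ l ∈ Bd jj, ¬ Λ.IsPrefix q₀ l ∧ ¬ Λ.IsPrefix l q₀ := hng
  have hspec : ∀ l ∈ Bd (g q₀), ¬ Λ.IsPrefix q₀ l ∧ ¬ Λ.IsPrefix l q₀ := by
    rw [show g q₀ = hex.choose from dif_pos hex]
    exact hex.choose_spec
  have hgle : g q₀ ≤ M := by
    refine le_trans (Finset.le_sup ?_) le_sup_left
    exact (hfin (j + 1)).mem_toFinset.mpr hq₀Bd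
  rcases le_total (j + 1) (g q₀) with hcase | hcase
  · obtain ⟨l₀, hdl₀, hq₀l₀, hl₀q⟩ := prefix_sandwich hq₀q (n := fun _ => g q₀)
      (by rw [hdq₀, Pi.le_def]; intro i; omega)
      (by rw [hdq, Pi.le_def]; intro i; omega)
    have hl₀Bd : l₀ ∈ Bd (g q₀) := hcl M q l₀ hqBd hl₀q (g q₀) hdl₀
    exact (hspec l₀ hl₀Bd).1 hq₀l₀
  · obtain ⟨l₀, hl₀q₀, hdl₀, -⟩ := exists_prefix (lam := q₀) (n := fun _ => g q₀)
      (by rw [hdq₀, Pi.le_def]; intro i; omega)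
    have hl₀Bd : l₀ ∈ Bd (g q₀) := hcl (j + 1) q₀ l₀ hq₀Bd hl₀q₀ (g q₀) hdl₀
    exact (hspec l₀ hl₀Bd).2 hl₀q₀

lemma konig (hk : 0 < k) (hrow : Λ.RowFinite)
    (Reach : Λ.Path → Prop) (hRcl : ∀ p, Reach (Λ.r p) → Reach (Λ.s p))
    (hRx : ∀ x : Λ.InfinitePath, ∃ m, Reach (x.seg m m))
    (w : Λ.Path) (hw : Λ.d w = 0) :
    ∃ n, ∀ p, Λ.r p = w → Λ.d p = n → Reach (Λ.s p) := by
  classical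
  by_contra hcon
  push_neg at hcon
  set Bd : ℕ → Set Λ.Path :=
    fun j => {p | Λ.r p = w ∧ Λ.d p = (fun _ => j) ∧ ¬ Reach (Λ.s p)} with hBd
  have hfin : ∀ j, (Bd j).Finite := fun j =>
    (hrow w hw (fun _ => j)).subset (fun p hp => ⟨hp.1, hp.2.1⟩)
  have hdeg : ∀ j p, p ∈ Bd j → Λ.d p = fun _ => j := fun j p hp => hp.2.1
  have hcl : ∀ j (l p : Λ.Path), l ∈ Bd j → Λ.IsPrefix p l →
      ∀ j', Λ.d p = (fun _ => j') → p ∈ Bd j' := by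
    rintro j l p ⟨hrl, hdl, hnr⟩ ⟨t, hst, hct⟩ j' hdp
    refine ⟨?_, hdp, ?_⟩
    · rw [← hrl, ← hct, Λ.r_comp _ _ hst]
    · intro hR
      apply hnr
      rw [← hct, Λ.s_comp _ _ hst]
      exact hRcl t (hst ▸ hR)
  have hBdne : ∀ j, (Bd j).Nonempty := by
    intro j
    obtain ⟨p, h1, h2, h3⟩ := hcon (fun _ => j)
    exact ⟨p, h1, h2, h3⟩
  -- base point
  have hw0 : w ∈ Bd 0 ∧ Grows Λ Bd w := by
    constructor
    · obtain ⟨p0, hr0, hd0, hnr0⟩ := hcon (fun _ => 0)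
      have hp0v : Λ.d p0 = 0 := by rw [hd0]; funext i; simp
      have hp0w : p0 = w := by rw [← hr0, Λ.r_of_deg_zero _ hp0v]
      refine ⟨Λ.r_of_deg_zero w hw, by rw [hw]; funext i; simp, ?_⟩
      simpa [hp0w] using hnr0
    · intro j
      obtain ⟨q, hq⟩ := hBdne j
      refine ⟨q, hq, Or.inl ⟨q, ?_, ?_⟩⟩
      · rw [Λ.s_of_deg_zero w hw, hq.1]
      · rw [show w = Λ.r q from hq.1.symm, Λ.id_comp]
  -- the chain
  let step' : ∀ j, {p // p ∈ Bd j ∧ Grows Λ Bd p} → {p // p ∈ Bd (j+1) ∧ Grows Λ Bd p} :=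
    fun j q => ⟨(konig_step hk Bd hfin hdeg hcl j q.1 q.2.2 (hdeg j q.1 q.2.1)).choose,
      (konig_step hk Bd hfin hdeg hcl j q.1 q.2.2 (hdeg j q.1 q.2.1)).choose_spec.1,
      (konig_step hk Bd hfin hdeg hcl j q.1 q.2.2 (hdeg j q.1 q.2.1)).choose_spec.2.2⟩
  let Fch : ∀ j, {p // p ∈ Bd j ∧ Grows Λ Bd p} :=
    fun j => Nat.rec ⟨w, hw0.1, hw0.2⟩ step' j
  have hFone : ∀ j, Λ.IsPrefix (Fch j).1 (Fch (j+1)).1 := fun j =>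
    (konig_step hk Bd hfin hdeg hcl j (Fch j).1 (Fch j).2.2
      (hdeg j (Fch j).1 (Fch j).2.1)).choose_spec.2.1
  have hFmono : ∀ j j', j ≤ j' → Λ.IsPrefix (Fch j).1 (Fch j').1 := by
    intro j j' h
    induction j' , h using Nat.le_induction with
    | base => exact isPrefix_refl _
    | succ j' hj ih => exact isPrefix_trans ih (hFone j')
  have hFd : ∀ j, Λ.d (Fch j).1 = fun _ => j := fun j => hdeg j _ (Fch j).2.1
  -- the infinite path
  set J : (Fin k → ℕ) → ℕ := fun n => ∑ i, n i with hJ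
  have hJle : ∀ n : Fin k → ℕ, n ≤ fun _ => J n := by
    intro n
    rw [Pi.le_def]
    intro i
    exact Finset.single_le_sum (f := n) (fun _ _ => Nat.zero_le _) (Finset.mem_univ i)
  have hJmono : ∀ m n : Fin k → ℕ, m ≤ n → J m ≤ J n := fun m n h =>
    Finset.sum_le_sum (fun i _ => h i)
  have hnle : ∀ (n : Fin k → ℕ) (j : ℕ), J n ≤ j → n ≤ Λ.d (Fch j).1 := by
    intro n j h
    rw [hFd j, Pi.le_def]
    intro i
    exact le_trans (hJle n i) h
  have hind : ∀ (m n : Fin k → ℕ) (j j' : ℕ), m ≤ n → J n ≤ j → j ≤ j' →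
      Λ.seg (Fch j').1 m n = Λ.seg (Fch j).1 m n := by
    intro m n j j' hm hj hjj
    obtain ⟨t, hst, hct⟩ := hFmono j j' hjj
    rw [← hct]
    exact seg_extend hst hm (hnle n j hj)
  let x : Λ.InfinitePath :=
    { seg := fun m n => Λ.seg (Fch (J n)).1 m n
      d_seg := fun m n h => (seg_spec_all h (hnle n (J n) le_rfl)).1
      r_seg := by
        intro m n h
        rw [(seg_spec_all h (hnle n (J n) le_rfl)).2.1]
        exact hind m m (J m) (J n) le_rfl le_rfl (hJmono m n h)
      s_seg := fun m n h => (seg_spec_all h (hnle n (J n) le_rfl)).2.2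
      comp_seg := by
        intro m n q h1 h2
        show Λ.comp (Λ.seg (Fch (J n)).1 m n) (Λ.seg (Fch (J q)).1 n q) =
          Λ.seg (Fch (J q)).1 m q
        rw [show Λ.seg (Fch (J n)).1 m n = Λ.seg (Fch (J q)).1 m n from
          (hind m n (J n) (J q) h1 le_rfl (hJmono n q h2)).symm]
        exact seg_comp' h1 h2 (hnle q (J q) le_rfl) }
  obtain ⟨m, hm⟩ := hRx x
  have hmd : m ≤ Λ.d (Fch (J m)).1 := hnle m (J m) le_rfl
  obtain ⟨p, hppre, hdp, hsegp⟩ := seg_self_prefix hmd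
  have hxm : x.seg m m = Λ.s p := hsegp
  rw [hxm] at hm
  obtain ⟨t, hst, hct⟩ := hppre
  have hns : ¬ Reach (Λ.s p) := by
    intro hR
    apply (Fch (J m)).2.1.2.2
    rw [← hct, Λ.s_comp _ _ hst]
    exact hRcl t (hst ▸ hR)
  exact hns hm

end KGraph
/-- Suppose `Λ` is cofinal, and let `a` be a nonzero element of the center of
`KP_R(Λ)` in normal form `a = ∑_{(α,β) ∈ F} r_{α,β} s_α s_{β*}`.  Then
`{v ∈ Λ⁰ : ∃ (α,β) ∈ F, v = r(β)} = Λ⁰`. -/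
theorem center_normal_form_W_eq_vertices
    (Λ : KGraph k) (hrow : Λ.RowFinite) (hsrc : Λ.NoSources)
    (R : Type*) [CommRing R]
    {A : Type*} [NonUnitalRing A] [Module R A] [SMulCommClass R A A]
    [IsScalarTower R A A] {S S' : Λ.Path → A}
    (hKP : IsKumjianPaskAlgebra R Λ A S S')
    (hcof : Λ.Cofinal)
    (a : A) (ha : a ≠ 0) (hcen : ∀ b : A, a * b = b * a)
    (F : Finset (Λ.Path × Λ.Path)) (c : Λ.Path × Λ.Path → R) (m : Fin k → ℕ)
    (hdm : ∀ x ∈ F, Λ.d x.2 = m)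
    (hss : ∀ x ∈ F, Λ.s x.1 = Λ.s x.2)
    (hc : ∀ x ∈ F, c x ≠ 0)
    (hnf : a = ∑ x ∈ F, c x • (S x.1 * S' x.2)) :
    {v : Λ.Path | Λ.d v = 0 ∧ ∃ x ∈ F, v = Λ.r x.2} =
      {v : Λ.Path | Λ.d v = 0} := by
  classical
  have fam := hKP.isFamily
  ext v
  simp only [Set.mem_setOf_eq]
  constructor
  · exact fun h => h.1
  intro hv
  refine ⟨hv, ?_⟩
  by_contra hW
  push_neg at hW
  have hsv : Λ.s v = v := Λ.s_of_deg_zero v hv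
  have hghost_r : ∀ q : Λ.Path, S' q * S (Λ.r q) = S' q := by
    intro q
    have h1 : Λ.s (Λ.r q) = Λ.r q := Λ.s_of_deg_zero _ (Λ.d_r q)
    have h2 := fam.ghost_mul_comp (Λ.r q) q h1
    rwa [Λ.id_comp, fam.vertex_eq _ (Λ.d_r q)] at h2
  have hghost_l : ∀ q : Λ.Path, S (Λ.s q) * S' q = S' q := by
    intro q
    have h1 : Λ.s q = Λ.r (Λ.s q) := (Λ.r_of_deg_zero _ (Λ.d_s q)).symm
    have h2 := fam.ghost_mul_comp q (Λ.s q) h1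
    rwa [Λ.comp_id, fam.vertex_eq _ (Λ.d_s q)] at h2
  have hav : a * S v = 0 := by
    rw [hnf, Finset.sum_mul]
    refine Finset.sum_eq_zero fun x hx => ?_
    rw [smul_mul_assoc, mul_assoc]
    have h0 : S' x.2 * S v = 0 := by
      rw [← hghost_r x.2, mul_assoc,
        (fam.orthogonal (Λ.r x.2) v (Λ.d_r x.2) hv).2 (Ne.symm (hW x hx)), mul_zero]
    rw [h0, mul_zero, smul_zero]
  have hreach1 : ∀ lam : Λ.Path, Λ.r lam = v → a * S lam = 0 := by
    intro lam hr
    have h1 : Λ.s v = Λ.r lam := by rw [hsv, hr]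
    have h2 : S v * S lam = S lam := by
      rw [fam.mul_comp v lam h1, show Λ.comp v lam = lam from by
        rw [show v = Λ.r lam from hr.symm]; exact Λ.id_comp lam]
    rw [← h2, ← mul_assoc, hav, zero_mul]
  have hreach2 : ∀ u : Λ.Path, (∃ lam, Λ.r lam = v ∧ Λ.s lam = u) → S u * a = 0 := by
    rintro u ⟨lam, hr, hs⟩
    have h0 : S lam * a = 0 := by rw [← hcen (S lam)]; exact hreach1 lam hr
    have h1 : S' lam * S lam = S u := by rw [(fam.kp3 lam lam rfl).1 rfl, hs]
    rw [← h1, mul_assoc, h0, mul_zero]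
  have hreach3 : ∀ q : Λ.Path, (∃ lam, Λ.r lam = v ∧ Λ.s lam = Λ.s q) →
      S' q * a = 0 := by
    intro q hq
    have h1 : a * S (Λ.s q) = 0 := by rw [hcen (S (Λ.s q))]; exact hreach2 _ hq
    rw [← hcen (S' q), ← hghost_l q, ← mul_assoc, h1, zero_mul]
  have hR1 : ∀ p : Λ.Path, (∃ lam, Λ.r lam = v ∧ Λ.s lam = Λ.r p) →
      (∃ lam, Λ.r lam = v ∧ Λ.s lam = Λ.s p) := by
    rintro p ⟨lam, hr, hs⟩
    exact ⟨Λ.comp lam p, by rw [Λ.r_comp _ _ hs, hr], by rw [Λ.s_comp _ _ hs]⟩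
  rcases Nat.eq_zero_or_pos k with hk | hk
  · subst hk
    have hF : F.Nonempty := by
      rcases F.eq_empty_or_nonempty with h | h
      · rw [h, Finset.sum_empty] at hnf; exact absurd hnf ha
      · exact h
    obtain ⟨x₀, hx₀⟩ := hF
    have hrv : Λ.r v = v := Λ.r_of_deg_zero v hv
    let xp : Λ.InfinitePath :=
      { seg := fun _ _ => v
        d_seg := fun m n _ => funext fun i => i.elim0
        r_seg := fun _ _ _ => hrv
        s_seg := fun _ _ _ => hsv
        comp_seg := fun _ _ _ _ _ => by
          show Λ.comp v v = v
          have h := Λ.id_comp v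
          rwa [hrv] at h }
    obtain ⟨n₀, lam, h1, h2⟩ := hcof xp (Λ.r x₀.2) (Λ.d_r x₀.2)
    have hdlam : Λ.d lam = 0 := funext fun i => i.elim0
    have e1 : lam = Λ.r x₀.2 := by rw [← h1, Λ.r_of_deg_zero lam hdlam]
    have e2 : lam = v := by rw [← Λ.s_of_deg_zero lam hdlam]; exact h2
    exact hW x₀ hx₀ (e2.symm.trans e1)
  · have hpwa : ∀ w : Λ.Path, Λ.d w = 0 → S w * a = 0 := by
      intro w hwv
      obtain ⟨n, hn⟩ := KGraph.konig hk hrow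
        (fun u => ∃ lam, Λ.r lam = v ∧ Λ.s lam = u) hR1
        (fun x => by
          obtain ⟨mm, lam, hh1, hh2⟩ := hcof x v hv
          exact ⟨mm, lam, hh1, hh2⟩)
        w hwv
      set n' : Fin k → ℕ := n + fun _ => 1 with hn'
      have hn'0 : n' ≠ 0 := by
        intro h
        have h0 := congrFun h ⟨0, hk⟩
        simp [hn'] at h0
      have hreachn' : ∀ p, Λ.r p = w → Λ.d p = n' →
          ∃ lam, Λ.r lam = v ∧ Λ.s lam = Λ.s p := by
        intro p hrp hdp
        obtain ⟨⟨p₁, p₂⟩, ⟨hd1, hd2, hs12, hc12⟩, -⟩ :=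
          Λ.factor p n (fun _ => 1) (by rw [hdp])
        have hr1 : Λ.r p₁ = w := by rw [← hrp, ← hc12, Λ.r_comp _ _ hs12]
        have h3 := hR1 p₂ (by rw [← hs12]; exact hn p₁ hr1 hd1)
        rwa [← hc12, Λ.s_comp _ _ hs12]
      have hkp4 := fam.kp4 w hwv n' hn'0 (hrow w hwv n').toFinset
        (fun p => (hrow w hwv n').mem_toFinset)
      rw [hkp4, Finset.sum_mul]
      refine Finset.sum_eq_zero fun p hp => ?_
      have hmem := ((hrow w hwv n').mem_toFinset).mp hp
      rw [mul_assoc, hreach3 p (hreachn' p hmem.1 hmem.2), mul_zero]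
    set W₀ : Finset Λ.Path := F.image (fun x => Λ.r x.2) with hW₀
    have haQ : a * (∑ w ∈ W₀, S w) = a := by
      conv_lhs => rw [hnf]
      rw [Finset.sum_mul]
      conv_rhs => rw [hnf]
      refine Finset.sum_congr rfl fun x hx => ?_
      rw [smul_mul_assoc]
      congr 1
      rw [mul_assoc]
      congr 1
      rw [Finset.mul_sum]
      rw [Finset.sum_eq_single_of_mem (Λ.r x.2)
        (Finset.mem_image_of_mem (fun x => Λ.r x.2) hx) ?_]
      · exact hghost_r x.2
      · intro w hw hne
        obtain ⟨y, hy, hyw⟩ := Finset.mem_image.mp hw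
        have hdw : Λ.d w = 0 := by rw [← hyw]; exact Λ.d_r y.2
        rw [← hghost_r x.2, mul_assoc,
          (fam.orthogonal (Λ.r x.2) w (Λ.d_r x.2) hdw).2 (fun h => hne h.symm),
          mul_zero]
    have hzero : a = 0 := by
      rw [← haQ, Finset.mul_sum]
      refine Finset.sum_eq_zero fun w hw => ?_
      obtain ⟨y, hy, hyw⟩ := Finset.mem_image.mp hw
      rw [hcen (S w)]
      exact hpwa w (by rw [← hyw]; exact Λ.d_r y.2)
    exact ha hzero
end
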